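/- Properties of the dichotomy loss: define l : ℝ → ℝ by l(t) = −(4t+1)·exp(−2) for t ≤ −1/2, l(t) = exp(1/t) for −1/2 ≤ t < 0, and l(t) = 0 for t ≥ 0. Then (i) l is differentiable on all of ℝ; (ii) t·l'(t) ≥ 0 for every t ∈ ℝ, so inf_{t∈ℝ} t·l'(t) = 0 and the infimum is attained (e.g., at any t > 0); and (iii) sup_{t∈ℝ} t·l'(t) = +∞. -/

import Mathlib

open Real Set Filter Topology

/-- The dichotomy loss: a smoothed version of the perceptron loss `max{−t, 0}`. -/
noncomputable def dich (t : ℝ) : ℝ :=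
  if t ≤ -(1/2 : ℝ) then -(4 * t + 1) * Real.exp (-2)
  else if t < 0 then Real.exp (1 / t)
  else 0

/-- Candidate derivative of `dich`. -/
noncomputable def dich' (t : ℝ) : ℝ :=
  if t ≤ -(1/2 : ℝ) then (-4) * Real.exp (-2)
  else -(t⁻¹ ^ 2 * expNegInvGlue (-t))

lemma E_deriv (x : ℝ) :
    HasDerivAt expNegInvGlue (x⁻¹ ^ 2 * expNegInvGlue x) x := by
  simpa using expNegInvGlue.hasDerivAt_polynomial_eval_inv_mul 1 x

lemma g_deriv (x : ℝ) :
    HasDerivAt (fun s => expNegInvGlue (-s)) (-(x⁻¹ ^ 2 * expNegInvGlue (-x))) x := by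
  have h := (E_deriv (-x)).comp x (hasDerivAt_neg x)
  refine h.congr_deriv ?_
  rw [inv_neg]
  ring

lemma dich_eq_left {t : ℝ} (ht : t ≤ -(1/2 : ℝ)) :
    dich t = -(4 * t + 1) * Real.exp (-2) := by rw [dich, if_pos ht]

lemma dich_eq_right {t : ℝ} (ht : -(1/2 : ℝ) ≤ t) : dich t = expNegInvGlue (-t) := by
  rcases lt_or_eq_of_le ht with h | h
  · rw [dich, if_neg (by linarith)]
    by_cases h0 : t < 0
    · rw [if_pos h0, expNegInvGlue, if_neg (by linarith)]
      congr 1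
      rw [inv_neg, one_div, neg_neg]
    · rw [if_neg h0, expNegInvGlue.zero_of_nonpos (by linarith)]
  · rw [← h]
    norm_num [dich, expNegInvGlue]

lemma lin_deriv (t : ℝ) :
    HasDerivAt (fun s : ℝ => -(4 * s + 1) * Real.exp (-2)) ((-4) * Real.exp (-2)) t := by
  have h : HasDerivAt (fun s : ℝ => -(4 * s + 1)) (-4) t := by
    exact (((hasDerivAt_id t).const_mul (4 : ℝ)).add_const 1).neg.congr_deriv (by norm_num)
  simpa using h.mul_const (Real.exp (-2))

lemma dich_hasDerivAt (t : ℝ) : HasDerivAt dich (dich' t) t := by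
  rcases lt_trichotomy t (-(1/2 : ℝ)) with h | h | h
  · rw [dich', if_pos h.le]
    refine (lin_deriv t).congr_of_eventuallyEq ?_
    filter_upwards [gt_mem_nhds h] with s hs
    exact dich_eq_left hs.le
  · subst h
    have hval : -(((-(1/2 : ℝ))⁻¹) ^ 2 * expNegInvGlue (-(-(1/2 : ℝ)))) = (-4) * Real.exp (-2) := by
      norm_num [expNegInvGlue]
    have hL : HasDerivWithinAt dich ((-4) * Real.exp (-2)) (Iic (-(1/2 : ℝ))) (-(1/2 : ℝ)) := by
      refine ((lin_deriv _).hasDerivWithinAt).congr (fun s hs => dich_eq_left hs) ?_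
      exact dich_eq_left le_rfl
    have hR : HasDerivWithinAt dich ((-4) * Real.exp (-2)) (Ici (-(1/2 : ℝ))) (-(1/2 : ℝ)) := by
      have hg := (g_deriv (-(1/2 : ℝ))).hasDerivWithinAt (s := Ici (-(1/2 : ℝ)))
      rw [hval] at hg
      exact hg.congr (fun s hs => dich_eq_right hs) (dich_eq_right le_rfl)
    have h := hL.union hR
    rw [Iic_union_Ici, hasDerivWithinAt_univ] at h
    rw [dich', if_pos le_rfl]
    exact h
  · rw [dich', if_neg (not_le.mpr h)]
    refine (g_deriv t).congr_of_eventuallyEq ?_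
    filter_upwards [lt_mem_nhds h] with s hs
    exact dich_eq_right hs.le

lemma deriv_dich (t : ℝ) : deriv dich t = dich' t := (dich_hasDerivAt t).deriv

/-- properties of the dichotomy loss: (i) it is differentiable on ℝ;
(ii) `t·l'(t) ≥ 0` everywhere and the infimum 0 is attained at any `t > 0`;
(iii) `sup_t t·l'(t) = +∞` (the map is unbounded above). -/
theorem stmt15 :
    Differentiable ℝ dich ∧
    (∀ t : ℝ, 0 ≤ t * deriv dich t) ∧
    (∀ t : ℝ, 0 < t → t * deriv dich t = 0) ∧
    ¬ BddAbove (Set.range fun t => t * deriv dich t) := by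
  refine ⟨fun t => (dich_hasDerivAt t).differentiableAt, ?_, ?_, ?_⟩
  · intro t
    rw [deriv_dich, dich']
    split_ifs with h
    · nlinarith [Real.exp_pos (-2 : ℝ)]
    · rcases le_or_gt 0 t with h0 | h0
      · rw [expNegInvGlue.zero_of_nonpos (by linarith)]
        simp
      · have : t * -(t⁻¹ ^ 2 * expNegInvGlue (-t)) = (-t) * (t⁻¹ ^ 2 * expNegInvGlue (-t)) := by
          ring
        rw [this]
        exact mul_nonneg (by linarith)
          (mul_nonneg (sq_nonneg _) (expNegInvGlue.nonneg _))
  · intro t ht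
    rw [deriv_dich, dich', if_neg (by linarith), expNegInvGlue.zero_of_nonpos (by linarith)]
    ring
  · rintro ⟨M, hM⟩
    set t0 : ℝ := min (-(1/2 : ℝ)) (-(|M| + 1) * Real.exp 2) with ht0
    have h1 : t0 ≤ -(1/2 : ℝ) := min_le_left _ _
    have h2 : t0 ≤ -(|M| + 1) * Real.exp 2 := min_le_right _ _
    have hle : t0 * deriv dich t0 ≤ M := hM (Set.mem_range_self t0)
    rw [deriv_dich, dich', if_pos h1] at hle
    have he : (0 : ℝ) < Real.exp 2 := Real.exp_pos 2
    have hee : Real.exp (-2) * Real.exp 2 = 1 := by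
      rw [← Real.exp_add]; norm_num
    have habs : M ≤ |M| := le_abs_self M
    have hepos : (0 : ℝ) < Real.exp (-2) := Real.exp_pos _
    nlinarith [mul_le_mul_of_nonneg_left h2 (le_of_lt hepos),
      mul_nonneg (abs_nonneg M) (le_of_lt he)]
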